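/- Let Q be the ground state, V(t) = ε − 3Q(t)² with ε ∈ [0,1], and suppose G_ε solves G_ε'' = (ε − 3Q²) G_ε with G_ε(0) = 0, G_ε'(0) = 1, and G_ε(t) > 0 for all t > 0. Let G solve G'' = (1 + ε₀ − 3Q²) G with G(0) = 0, G'(0) = 1, where ε₀ > 0, and suppose G > 0 on (0,∞) and G(t) ≤ C e^{−√(1+ε₀) t} for large t. Then 0 < G_ε(t) ≤ G(t) for all t > 0, hence G_ε(t) ≤ C e^{−√(1+ε₀) t} for large t. -/

import Mathlib

open Set Real Filter Topology

/-- Comparison of the `l = 0` solution with the decaying negative-eigenvalue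
eigenfunction: `0 < G_ε ≤ G`, hence `G_ε` inherits the exponential decay of `G`. -/
theorem comparison_with_eigenfunction (Q : ℝ → ℝ) (hQc : Continuous Q)
    (ε ε₀ : ℝ) (hε : ε ∈ Icc (0:ℝ) 1) (hε₀ : 0 < ε₀)
    (Gε G : ℝ → ℝ)
    (hGε : ContDiffOn ℝ 2 Gε (Ici 0)) (hG : ContDiffOn ℝ 2 G (Ici 0))
    (hGεode : ∀ t > (0:ℝ), deriv (deriv Gε) t = (ε - 3 * Q t ^ 2) * Gε t)
    (hGode : ∀ t > (0:ℝ), deriv (deriv G) t = (1 + ε₀ - 3 * Q t ^ 2) * G t)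
    (hGε0 : Gε 0 = 0) (hGε0' : deriv Gε 0 = 1)
    (hG0 : G 0 = 0) (hG0' : deriv G 0 = 1)
    (hGεpos : ∀ t > (0:ℝ), 0 < Gε t)
    (hGpos : ∀ t > (0:ℝ), 0 < G t)
    (hGdecay : ∃ C > (0:ℝ), ∃ T : ℝ, ∀ t ≥ T,
      G t ≤ C * Real.exp (-Real.sqrt (1 + ε₀) * t)) :
    (∀ t > (0:ℝ), 0 < Gε t ∧ Gε t ≤ G t) ∧
      ∃ C > (0:ℝ), ∃ T : ℝ, ∀ t ≥ T,
        Gε t ≤ C * Real.exp (-Real.sqrt (1 + ε₀) * t) := by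
  obtain ⟨hε0, hε1⟩ := hε
  have hGεd0 : DifferentiableAt ℝ Gε 0 :=
    differentiableAt_of_deriv_ne_zero (by rw [hGε0']; norm_num)
  have hGd0 : DifferentiableAt ℝ G 0 :=
    differentiableAt_of_deriv_ne_zero (by rw [hG0']; norm_num)
  set W : ℝ → ℝ := fun s => derivWithin Gε (Ici 0) s * G s - Gε s * derivWithin G (Ici 0) s
    with hWdef
  have heqε : ∀ t : ℝ, 0 < t → derivWithin Gε (Ici 0) t = deriv Gε t :=
    fun t ht => derivWithin_of_mem_nhds (Ici_mem_nhds ht)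
  have heqG : ∀ t : ℝ, 0 < t → derivWithin G (Ici 0) t = deriv G t :=
    fun t ht => derivWithin_of_mem_nhds (Ici_mem_nhds ht)
  have hdGε : ContDiffOn ℝ 1 (deriv Gε) (Ioi 0) :=
    (hGε.mono Ioi_subset_Ici_self).deriv_of_isOpen isOpen_Ioi (by norm_num)
  have hdG : ContDiffOn ℝ 1 (deriv G) (Ioi 0) :=
    (hG.mono Ioi_subset_Ici_self).deriv_of_isOpen isOpen_Ioi (by norm_num)
  have hGεdiff : ∀ t : ℝ, 0 < t → HasDerivAt Gε (deriv Gε t) t := fun t ht =>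
    ((((hGε.mono Ioi_subset_Ici_self).differentiableOn (by norm_num)).differentiableAt
      (isOpen_Ioi.mem_nhds ht)).hasDerivAt)
  have hGdiff : ∀ t : ℝ, 0 < t → HasDerivAt G (deriv G t) t := fun t ht =>
    ((((hG.mono Ioi_subset_Ici_self).differentiableOn (by norm_num)).differentiableAt
      (isOpen_Ioi.mem_nhds ht)).hasDerivAt)
  have hdGεdiff : ∀ t : ℝ, 0 < t → HasDerivAt (deriv Gε) (deriv (deriv Gε) t) t := fun t ht =>
    (((hdGε.differentiableOn (by norm_num)).differentiableAt (isOpen_Ioi.mem_nhds ht)).hasDerivAt)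
  have hdGdiff : ∀ t : ℝ, 0 < t → HasDerivAt (deriv G) (deriv (deriv G) t) t := fun t ht =>
    (((hdG.differentiableOn (by norm_num)).differentiableAt (isOpen_Ioi.mem_nhds ht)).hasDerivAt)
  -- derivative of the Wronskian
  have hWderiv : ∀ t : ℝ, 0 < t → HasDerivAt W ((ε - 1 - ε₀) * (Gε t * G t)) t := by
    intro t ht
    have h1 : HasDerivAt (fun s => deriv Gε s * G s - Gε s * deriv G s)
        ((ε - 1 - ε₀) * (Gε t * G t)) t := by
      have h2 := ((hdGεdiff t ht).mul (hGdiff t ht)).sub ((hGεdiff t ht).mul (hdGdiff t ht))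
      refine h2.congr_deriv ?_
      rw [hGεode t ht, hGode t ht]; ring
    apply h1.congr_of_eventuallyEq
    filter_upwards [isOpen_Ioi.mem_nhds ht] with s hs
    simp only [hWdef, heqε s hs, heqG s hs]
  have hWcont : ContinuousOn W (Ici 0) :=
    ((hGε.continuousOn_derivWithin (uniqueDiffOn_Ici 0) (by norm_num)).mul
      hG.continuousOn).sub
      (hGε.continuousOn.mul (hG.continuousOn_derivWithin (uniqueDiffOn_Ici 0) (by norm_num)))
  have hW0 : W 0 = 0 := by simp [hWdef, hGε0, hG0]
  have hWle : ∀ t : ℝ, 0 < t → W t ≤ 0 := by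
    intro t ht
    have hanti : AntitoneOn W (Ici 0) := by
      apply antitoneOn_of_deriv_nonpos (convex_Ici 0) hWcont
      · rw [interior_Ici]
        exact fun x hx => (hWderiv x hx).differentiableAt.differentiableWithinAt
      · rw [interior_Ici]
        intro x hx
        rw [(hWderiv x hx).deriv]
        have h1 : ε - 1 - ε₀ ≤ 0 := by linarith
        have h2 := mul_pos (hGεpos x hx) (hGpos x hx)
        nlinarith
    have := hanti self_mem_Ici (mem_Ici.2 ht.le) ht.le
    linarith [hW0 ▸ this]
  -- the ratio is antitone on (0, ∞)
  have hratio_anti : AntitoneOn (fun s => Gε s / G s) (Ioi 0) := by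
    apply antitoneOn_of_deriv_nonpos (convex_Ioi 0)
    · exact ContinuousOn.div
        (hGε.continuousOn.mono Ioi_subset_Ici_self)
        (hG.continuousOn.mono Ioi_subset_Ici_self)
        (fun x hx => (hGpos x hx).ne')
    · rw [interior_Ioi]
      exact fun x hx =>
        (((hGεdiff x hx).div (hGdiff x hx) (hGpos x hx).ne')).differentiableAt.differentiableWithinAt
    · rw [interior_Ioi]
      intro x hx
      have hd := (hGεdiff x hx).div (hGdiff x hx) (hGpos x hx).ne'
      rw [HasDerivAt.deriv (f := fun s => Gε s / G s) hd]
      have hWx : deriv Gε x * G x - Gε x * deriv G x ≤ 0 := by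
        have := hWle x hx
        simpa only [hWdef, heqε x hx, heqG x hx] using this
      exact div_nonpos_of_nonpos_of_nonneg hWx (sq_nonneg _)
  -- limit of the ratio at 0⁺ is 1
  have hslopeε : Tendsto (fun s => Gε s / s) (𝓝[>] (0:ℝ)) (𝓝 1) := by
    have h1 : HasDerivAt Gε 1 0 := hGε0' ▸ hGεd0.hasDerivAt
    have h2 := hasDerivAt_iff_tendsto_slope.1 h1
    have h3 : Tendsto (slope Gε 0) (𝓝[>] (0:ℝ)) (𝓝 1) :=
      h2.mono_left (nhdsWithin_mono _ (fun x hx => ne_of_gt hx))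
    refine h3.congr' ?_
    filter_upwards [self_mem_nhdsWithin] with s hs
    simp [slope, hGε0, div_eq_inv_mul]
  have hslopeG : Tendsto (fun s => G s / s) (𝓝[>] (0:ℝ)) (𝓝 1) := by
    have h1 : HasDerivAt G 1 0 := hG0' ▸ hGd0.hasDerivAt
    have h2 := hasDerivAt_iff_tendsto_slope.1 h1
    have h3 : Tendsto (slope G 0) (𝓝[>] (0:ℝ)) (𝓝 1) :=
      h2.mono_left (nhdsWithin_mono _ (fun x hx => ne_of_gt hx))
    refine h3.congr' ?_
    filter_upwards [self_mem_nhdsWithin] with s hs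
    simp [slope, hG0, div_eq_inv_mul]
  have hlim : Tendsto (fun s => Gε s / G s) (𝓝[>] (0:ℝ)) (𝓝 1) := by
    have h1 := hslopeε.div hslopeG one_ne_zero
    rw [div_one] at h1
    refine h1.congr' ?_
    filter_upwards [self_mem_nhdsWithin] with s hs
    have hs0 : (s:ℝ) ≠ 0 := ne_of_gt hs
    have hGs : G s ≠ 0 := (hGpos s hs).ne'
    simp only [Pi.div_apply]; field_simp
  -- the main pointwise bound
  have hmain : ∀ t > (0:ℝ), Gε t ≤ G t := by
    intro t ht
    have hle : Gε t / G t ≤ 1 := by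
      apply ge_of_tendsto hlim
      filter_upwards [Ioo_mem_nhdsGT_of_mem (left_mem_Ico.2 ht)] with s hs
      exact hratio_anti hs.1 ht hs.2.le
    exact (div_le_one (hGpos t ht)).1 hle
  refine ⟨fun t ht => ⟨hGεpos t ht, hmain t ht⟩, ?_⟩
  obtain ⟨C, hC, T, hT⟩ := hGdecay
  refine ⟨C, hC, max T 1, fun t ht => ?_⟩
  have ht0 : (0:ℝ) < t := lt_of_lt_of_le one_pos (le_trans (le_max_right T 1) ht)
  exact le_trans (hmain t ht0) (hT t (le_trans (le_max_left T 1) ht))
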